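/- (Monotonicity of the specific-resources multiserver-job map.) Fix s ≥ 1, a subset S ⊆ {1,…,s}, an integer α ≥ 1 with α + |S| ≤ s, and σ, τ ≥ 0. Then the SMJSRE one-step map sending an ordered vector W of ℝ^s to R(V(α,S,W) + σ·F(α,S) − τ·U)^+ is coordinatewise nondecreasing on ordered vectors: W ≤ W' implies the images satisfy the same coordinatewise inequality. -/

import Mathlib

/-- The nondecreasing rearrangement operator `R` on vectors of ℝ^s. -/
noncomputable def sortVec {s : ℕ} (v : Fin s → ℝ) : Fin s → ℝ := v ∘ Tuple.sort v

/-- A vector is ordered if its coordinates are nondecreasing and nonnegative. -/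
def IsOrdered {s : ℕ} (W : Fin s → ℝ) : Prop := Monotone W ∧ ∀ i, 0 ≤ W i

/-- `k(S,i)`: the number of indices `j ≤ i` not belonging to the specific set `S`. -/
def kcount {s : ℕ} (S : Finset (Fin s)) (i : Fin s) : ℕ :=
  (Finset.univ.filter (fun j => j ≤ i ∧ j ∉ S)).card

/-- The indicator vector `F(α,S)`: coordinate `i` equals `1` if `i ∈ S` or
(`i ∉ S` and `k(S,i) ≤ α`), and `0` otherwise. -/
def Fvec {s : ℕ} (α : ℕ) (S : Finset (Fin s)) : Fin s → ℝ :=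
  fun i => if i ∈ S ∨ (i ∉ S ∧ kcount S i ≤ α) then 1 else 0

/-- The vector `V(α,S,W)`: coordinate `i` equals
`Ŵ = max (max_{j ∈ S} W^j) (W^{i*})` if `i ∈ S` or (`i ∉ S` and `k(S,i) ≤ α`), and `W^i`
otherwise, where `i*` is the smallest index with `k(S,i*) = α`. -/
noncomputable def Vvec {s : ℕ} (α : ℕ) (S : Finset (Fin s)) (istar : Fin s)
    (W : Fin s → ℝ) : Fin s → ℝ :=
  fun i => if i ∈ S ∨ (i ∉ S ∧ kcount S i ≤ α)
    then (insert istar S).sup' (Finset.insert_nonempty _ _) W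
    else W i

lemma sortVec_mono {s : ℕ} {v w : Fin s → ℝ} (h : ∀ i, v i ≤ w i) :
    ∀ i, sortVec v i ≤ sortVec w i := by
  intro i
  set a := sortVec w i with ha
  have hmw : Monotone (sortVec w) := Tuple.monotone_sort w
  have hmv : Monotone (sortVec v) := Tuple.monotone_sort v
  have h1 : (i : Fin s) < Fintype.card {j // sortVec w j ≤ a} :=
    by rw [Fintype.card_subtype]; exact (Tuple.lt_card_le_iff_apply_le_of_monotone hmw).2 le_rfl
  have ew : Fintype.card {j // sortVec w j ≤ a} = Fintype.card {j // w j ≤ a} :=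
    Fintype.card_congr ((Tuple.sort w).subtypeEquiv (fun j => Iff.rfl))
  have ev : Fintype.card {j // v j ≤ a} = Fintype.card {j // sortVec v j ≤ a} :=
    (Fintype.card_congr ((Tuple.sort v).subtypeEquiv (fun j => Iff.rfl))).symm
  have hsub : Fintype.card {j // w j ≤ a} ≤ Fintype.card {j // v j ≤ a} :=
    Fintype.card_le_of_injective (fun x => ⟨x.1, (h x.1).trans x.2⟩)
      (fun x y hxy => Subtype.ext (by simpa using congrArg Subtype.val hxy))
  have h2 : (i : Fin s) < Fintype.card {j // sortVec v j ≤ a} :=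
    lt_of_lt_of_le h1 (by rw [ew]; exact hsub.trans ev.le)
  rw [Fintype.card_subtype] at h2; exact (Tuple.lt_card_le_iff_apply_le_of_monotone hmv).1 h2

/-- Monotonicity of the specific-resources multiserver-job (SMJSRE) one-step map
`W ↦ R(V(α,S,W) + σ·F(α,S) − τ·U)⁺` on ordered vectors. -/
theorem SMJSRE_mono (s : ℕ) (hs : 0 < s) (S : Finset (Fin s)) (α : ℕ)
    (hα : 1 ≤ α) (hcard : α + S.card ≤ s) (σ τ : ℝ) (hσ : 0 ≤ σ) (hτ : 0 ≤ τ)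
    (istar : Fin s) (histar : kcount S istar = α ∧ ∀ i, kcount S i = α → istar ≤ i)
    (W W' : Fin s → ℝ) (hW : IsOrdered W) (hW' : IsOrdered W')
    (hle : ∀ i, W i ≤ W' i) :
    ∀ i, sortVec (fun i' => max (Vvec α S istar W i' + σ * Fvec α S i' - τ) 0) i
      ≤ sortVec (fun i' => max (Vvec α S istar W' i' + σ * Fvec α S i' - τ) 0) i := by
  apply sortVec_mono
  intro i
  have hV : Vvec α S istar W i ≤ Vvec α S istar W' i := by
    unfold Vvec
    split
    · exact Finset.sup'_mono_fun (fun b _ => hle b)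
    · exact hle i
  exact max_le_max (by linarith) le_rfl
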